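/- Each of the two m-dimensional cubes constituting the Delone polytope of D_{2m+1}^* centered at u is a face of that polytope: both convexHull ℝ C_int and convexHull ℝ C_half are extreme subsets of convexHull ℝ (C_int ∪ C_half), i.e. IsExtreme ℝ (convexHull ℝ (C_int ∪ C_half)) (convexHull ℝ C_int) and IsExtreme ℝ (convexHull ℝ (C_int ∪ C_half)) (convexHull ℝ C_half) hold (this expresses that the Delone polytope is the join of the two cubes). -/

import Mathlib

/-- If a linear functional is constant on `A`, constant on `B`, and takes different values
on `A` and `B`, then `convexHull ℝ A` is extreme in `convexHull ℝ (A ∪ B)`. -/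
lemma extreme_of_const_proj {E : Type*} [AddCommGroup E] [Module ℝ E]
    (A B : Set E) (f : E →ₗ[ℝ] ℝ)
    (hAA : ∀ x ∈ A, ∀ y ∈ A, f x = f y)
    (hBB : ∀ x ∈ B, ∀ y ∈ B, f x = f y)
    (hAB : ∀ x ∈ A, ∀ y ∈ B, f x ≠ f y) :
    IsExtreme ℝ (convexHull ℝ (A ∪ B)) (convexHull ℝ A) := by
  rcases A.eq_empty_or_nonempty with hAe | hAne
  · rw [hAe, convexHull_empty]
    refine ⟨Set.empty_subset _, ?_⟩
    intro x₁ _ x₂ _ x hx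
    exact absurd hx (Set.notMem_empty x)
  rcases B.eq_empty_or_nonempty with hBe | hBne
  · have he : A ∪ B = A := by rw [hBe, Set.union_empty]
    rw [he]
  obtain ⟨a₀, ha₀⟩ := hAne
  obtain ⟨b₀, hb₀⟩ := hBne
  set a := f a₀ with ha
  set b := f b₀ with hb
  have hab : a ≠ b := hAB a₀ ha₀ b₀ hb₀
  have hA' : ∀ x ∈ convexHull ℝ A, f x = a := by
    intro x hx
    have : convexHull ℝ A ⊆ f ⁻¹' {a} :=
      convexHull_min (fun y hy => hAA y hy a₀ ha₀) ((convex_singleton a).linear_preimage f)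
    exact this hx
  have hB' : ∀ x ∈ convexHull ℝ B, f x = b := by
    intro x hx
    have : convexHull ℝ B ⊆ f ⁻¹' {b} :=
      convexHull_min (fun y hy => hBB y hy b₀ hb₀) ((convex_singleton b).linear_preimage f)
    exact this hx
  have hdec : ∀ x ∈ convexHull ℝ (A ∪ B), ∃ q : ℝ, 0 ≤ q ∧ q ≤ 1 ∧
      f x = a + q * (b - a) ∧ (q = 0 → x ∈ convexHull ℝ A) := by
    intro x hx
    rw [convexHull_union ⟨a₀, ha₀⟩ ⟨b₀, hb₀⟩, mem_convexJoin] at hx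
    obtain ⟨y, hy, z, hz, p, q, hp, hq, hpq, hxe⟩ := hx
    refine ⟨q, hq, by linarith, ?_, ?_⟩
    · have hfx : f x = p * f y + q * f z := by
        rw [← hxe]; simp [map_add, map_smul, smul_eq_mul]
      rw [hfx, hA' y hy, hB' z hz]
      linear_combination a * hpq
    · intro hq0
      subst hq0
      have hp1 : p = 1 := by linarith
      subst hp1
      rw [one_smul, zero_smul, add_zero] at hxe
      rwa [← hxe]
  constructor
  · exact convexHull_mono Set.subset_union_left
  · intro x₁ h₁ x₂ h₂ x hx hseg
    obtain ⟨q₁, hq₁0, hq₁1, hf₁, hq₁A⟩ := hdec x₁ h₁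
    obtain ⟨q₂, hq₂0, hq₂1, hf₂, hq₂A⟩ := hdec x₂ h₂
    obtain ⟨p, q, hp, hq, hpq, hxe⟩ := hseg
    have hfx : f x = a := hA' x hx
    have hfx' : f x = p * f x₁ + q * f x₂ := by
      rw [← hxe]; simp [map_add, map_smul, smul_eq_mul]
    rw [hfx, hf₁, hf₂] at hfx'
    have hkey : (p * q₁ + q * q₂) * (b - a) = 0 := by
      linear_combination -hfx' - a * hpq
    have hba : b - a ≠ 0 := sub_ne_zero.mpr (Ne.symm hab)
    have hsum : p * q₁ + q * q₂ = 0 := by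
      rcases mul_eq_zero.mp hkey with h | h
      · exact h
      · exact absurd h hba
    have hpos1 : p * q₁ = 0 := by nlinarith [mul_nonneg hp.le hq₁0, mul_nonneg hq.le hq₂0]
    have hpos2 : q * q₂ = 0 := by nlinarith [mul_nonneg hp.le hq₁0, mul_nonneg hq.le hq₂0]
    have hq1z : q₁ = 0 := by
      rcases mul_eq_zero.mp hpos1 with h | h
      · exact absurd h hp.ne'
      · exact h
    have hq2z : q₂ = 0 := by
      rcases mul_eq_zero.mp hpos2 with h | h
      · exact absurd h hq.ne'
      · exact h
    exact hq₁A hq1z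

/-- Each of the two `m`-dimensional cubes constituting the Delone polytope of `D_{2m+1}^*`
centered at `u` is a face (extreme subset) of that polytope; this expresses that the
Delone polytope is the join of the two cubes. -/
theorem stmt_6 (m : ℕ) (hm : 1 ≤ m)
    (j : Fin (2 * m + 1))
    (S I : Finset (Fin (2 * m + 1)))
    (hSI : Disjoint S I) (hS : S.card = m) (hI : I.card = m)
    (hU : S ∪ I = Finset.univ \ {j})
    (u : EuclideanSpace ℝ (Fin (2 * m + 1)))
    (huS : ∀ i ∈ S, ∃ k : ℤ, u i = (k : ℝ) + 1/2)
    (huI : ∀ i ∈ I, ∃ k : ℤ, u i = (k : ℝ))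
    (huj : ∃ k : ℤ, u j = 1/4 + (k : ℝ) / 2)
    (Chalf Cint : Set (EuclideanSpace ℝ (Fin (2 * m + 1))))
    (hChalf : Chalf = {x : EuclideanSpace ℝ (Fin (2 * m + 1)) |
      (∀ i ∈ S, x i = u i) ∧ (∀ i ∈ I, |x i - u i| = 1/2) ∧
      (∃ k : ℤ, x j = (k : ℝ) + 1/2) ∧ |x j - u j| = 1/4})
    (hCint : Cint = {x : EuclideanSpace ℝ (Fin (2 * m + 1)) |
      (∀ i ∈ I, x i = u i) ∧ (∀ i ∈ S, |x i - u i| = 1/2) ∧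
      (∃ k : ℤ, x j = (k : ℝ)) ∧ |x j - u j| = 1/4}) :
    IsExtreme ℝ (convexHull ℝ (Cint ∪ Chalf)) (convexHull ℝ Cint) ∧
    IsExtreme ℝ (convexHull ℝ (Cint ∪ Chalf)) (convexHull ℝ Chalf) := by
  -- the linear functional given by the `j`-th coordinate
  set f : EuclideanSpace ℝ (Fin (2 * m + 1)) →ₗ[ℝ] ℝ :=
    { toFun := fun x => x j
      map_add' := fun _ _ => rfl
      map_smul' := fun _ _ => rfl } with hf
  have hfval : ∀ x : EuclideanSpace ℝ (Fin (2 * m + 1)), f x = x j := fun _ => rfl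
  have key : ∀ (kx ky : ℤ) (xj yj uj : ℝ), xj = kx → yj = ky →
      |xj - uj| = 1/4 → |yj - uj| = 1/4 → xj = yj := by
    intro kx ky xj yj uj hkx hky hdx hdy
    have habs : |(kx : ℝ) - ky| ≤ 1/2 := by
      have ht : |xj - yj| ≤ |xj - uj| + |uj - yj| := abs_sub_le xj uj yj
      rw [hdx, abs_sub_comm uj yj, hdy] at ht
      rw [hkx, hky] at ht
      linarith [ht]
    have hlt : |((kx - ky : ℤ) : ℝ)| < 1 := by push_cast; linarith
    have hZ : |kx - ky| < 1 := by exact_mod_cast hlt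
    rw [abs_lt] at hZ
    have : kx = ky := by omega
    rw [hkx, hky, this]
  -- f is constant on Cint
  have hII : ∀ x ∈ Cint, ∀ y ∈ Cint, f x = f y := by
    intro x hx y hy
    rw [hCint] at hx hy
    obtain ⟨-, -, ⟨kx, hkx⟩, hdx⟩ := hx
    obtain ⟨-, -, ⟨ky, hky⟩, hdy⟩ := hy
    rw [hfval, hfval]
    exact key kx ky _ _ (u j) hkx hky hdx hdy
  -- f is constant on Chalf
  have hHH : ∀ x ∈ Chalf, ∀ y ∈ Chalf, f x = f y := by
    intro x hx y hy
    rw [hChalf] at hx hy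
    obtain ⟨-, -, ⟨kx, hkx⟩, hdx⟩ := hx
    obtain ⟨-, -, ⟨ky, hky⟩, hdy⟩ := hy
    rw [hfval, hfval]
    have h1 : x j - 1/2 = ((kx : ℝ)) := by rw [hkx]; ring
    have h2 : y j - 1/2 = ((ky : ℝ)) := by rw [hky]; ring
    have := key kx ky (x j - 1/2) (y j - 1/2) (u j - 1/2) h1 h2
      (by rw [show x j - 1/2 - (u j - 1/2) = x j - u j by ring]; exact hdx)
      (by rw [show y j - 1/2 - (u j - 1/2) = y j - u j by ring]; exact hdy)
    linarith
  -- f separates Cint and Chalf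
  have hIH : ∀ x ∈ Cint, ∀ y ∈ Chalf, f x ≠ f y := by
    intro x hx y hy h
    rw [hCint] at hx; rw [hChalf] at hy
    obtain ⟨-, -, ⟨kx, hkx⟩, -⟩ := hx
    obtain ⟨-, -, ⟨ky, hky⟩, -⟩ := hy
    rw [hfval, hfval, hkx, hky] at h
    have h2 : ((2*kx - 2*ky : ℤ) : ℝ) = 1 := by push_cast; linarith
    have h3 : (2*kx - 2*ky : ℤ) = 1 := by exact_mod_cast h2
    omega
  refine ⟨extreme_of_const_proj Cint Chalf f hII hHH hIH, ?_⟩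
  have hcomm : Cint ∪ Chalf = Chalf ∪ Cint := Set.union_comm _ _
  rw [hcomm]
  exact extreme_of_const_proj Chalf Cint f hHH hII (fun x hx y hy => (hIH y hy x hx).symm)
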